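/- In the birth-death setting, for every j ∈ ℕ the function g_j satisfies: (a) α(i) g_j(i+1) − β(i) g_j(i) = 1_{i=j} − π(j) for all i ∈ ℕ; (b) for all i ≥ 1, g_j(i+1) − g_j(i) = π(j) [ (e_{i−1}^+ − e_i^+) 1_{j ≥ i+1} + (e_{i+1}^- + e_{i−1}^+) 1_{i=j} + (e_{i+1}^- − e_i^-) 1_{j ≤ i−1} ]. -/

import Mathlib

open scoped BigOperators

/-- `w(x) = ∏_{y=1}^x α(y−1)/β(y)` (empty product equal to `1`). -/
noncomputable def bdW (a b : ℕ → ℝ) (x : ℕ) : ℝ := ∏ y ∈ Finset.range x, a y / b (y + 1)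

/-- The invariant probability measure `π` of the birth-death process:
`π(x) = π(0) ∏_{y=1}^x α(y−1)/β(y)` with `π(0) = (Σ_{x≥0} w(x))⁻¹`. -/
noncomputable def bdPi (a b : ℕ → ℝ) (x : ℕ) : ℝ := bdW a b x / ∑' y : ℕ, bdW a b y

/-- `e_i^+ = (Σ_{k=0}^i π(k)) / (α(i) π(i))`. -/
noncomputable def ePlus (a b : ℕ → ℝ) (i : ℕ) : ℝ :=
  (∑ k ∈ Finset.range (i + 1), bdPi a b k) / (a i * bdPi a b i)

/-- `e_i^- = (Σ_{k=i}^∞ π(k)) / (β(i) π(i))`. -/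
noncomputable def eMinus (a b : ℕ → ℝ) (i : ℕ) : ℝ :=
  (∑' k : ℕ, bdPi a b (i + k)) / (b i * bdPi a b i)

/-- `g_j(0) = 0` and `g_j(i) = π(j)(−e_{i−1}^+ 1_{i≤j} + e_i^- 1_{i≥j+1})` for `i ≥ 1`. -/
noncomputable def gBD (a b : ℕ → ℝ) (j i : ℕ) : ℝ :=
  if i = 0 then 0
  else bdPi a b j *
    ((if i ≤ j then -ePlus a b (i - 1) else 0) + (if j + 1 ≤ i then eMinus a b i else 0))

section Aux

variable {a b : ℕ → ℝ}

lemma bdW_pos (ha : ∀ x : ℕ, 0 < a x) (hb : ∀ x : ℕ, 1 ≤ x → 0 < b x) (x : ℕ) :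
    0 < bdW a b x :=
  Finset.prod_pos fun y _ => div_pos (ha y) (hb (y + 1) (Nat.le_add_left 1 y))

lemma bdS_pos (ha : ∀ x : ℕ, 0 < a x) (hb : ∀ x : ℕ, 1 ≤ x → 0 < b x)
    (hw : Summable (bdW a b)) : 0 < ∑' y : ℕ, bdW a b y :=
  Summable.tsum_pos hw (fun x => (bdW_pos ha hb x).le) 0 (bdW_pos ha hb 0)

lemma bdPi_pos (ha : ∀ x : ℕ, 0 < a x) (hb : ∀ x : ℕ, 1 ≤ x → 0 < b x)
    (hw : Summable (bdW a b)) (x : ℕ) : 0 < bdPi a b x :=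
  div_pos (bdW_pos ha hb x) (bdS_pos ha hb hw)

lemma bdPi_summable (hw : Summable (bdW a b)) : Summable (bdPi a b) := by
  unfold bdPi
  exact hw.div_const _

lemma tsum_bdPi (ha : ∀ x : ℕ, 0 < a x) (hb : ∀ x : ℕ, 1 ≤ x → 0 < b x)
    (hw : Summable (bdW a b)) : ∑' x : ℕ, bdPi a b x = 1 := by
  unfold bdPi
  rw [tsum_div_const]
  exact div_self (bdS_pos ha hb hw).ne'

/-- detailed balance: `a i * π i = b (i+1) * π (i+1)`. -/
lemma bd_rec (ha : ∀ x : ℕ, 0 < a x) (hb : ∀ x : ℕ, 1 ≤ x → 0 < b x)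
    (hw : Summable (bdW a b)) (i : ℕ) :
    a i * bdPi a b i = b (i + 1) * bdPi a b (i + 1) := by
  have hS := (bdS_pos ha hb hw).ne'
  have hbpos := (hb (i + 1) (by omega)).ne'
  have hwrec : bdW a b (i + 1) = bdW a b i * (a i / b (i + 1)) :=
    Finset.prod_range_succ _ _
  unfold bdPi
  rw [hwrec]
  field_simp

/-- `T i = π i + T (i+1)` where `T i = ∑' k, π (i+k)`. -/
lemma tail_succ (hw : Summable (bdW a b)) (i : ℕ) :
    (∑' k : ℕ, bdPi a b (i + k)) = bdPi a b i + ∑' k : ℕ, bdPi a b (i + 1 + k) := by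
  have hsum : Summable (fun k => bdPi a b (i + k)) :=
    (bdPi_summable hw).comp_injective (add_right_injective i)
  rw [Summable.tsum_eq_zero_add hsum]
  congr 1
  exact tsum_congr fun k => by rw [show i + (k + 1) = i + 1 + k by omega]

lemma sum_add_tail (ha : ∀ x : ℕ, 0 < a x) (hb : ∀ x : ℕ, 1 ≤ x → 0 < b x)
    (hw : Summable (bdW a b)) (i : ℕ) :
    (∑ k ∈ Finset.range (i + 1), bdPi a b k) + ∑' k : ℕ, bdPi a b (i + 1 + k) = 1 := by
  have h := Summable.sum_add_tsum_nat_add (f := bdPi a b) (i + 1) (bdPi_summable hw)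
  rw [tsum_bdPi ha hb hw] at h
  rw [← h]
  congr 1
  exact tsum_congr fun k => by rw [show i + 1 + k = k + (i + 1) by omega]

lemma mulA_ePlus (ha : ∀ x : ℕ, 0 < a x) (i : ℕ) :
    a i * ePlus a b i = (∑ k ∈ Finset.range (i + 1), bdPi a b k) / bdPi a b i := by
  rw [ePlus, div_mul_eq_div_div_swap, mul_comm, div_mul_cancel₀ _ (ha i).ne']

lemma mulB_ePlus (ha : ∀ x : ℕ, 0 < a x) (hb : ∀ x : ℕ, 1 ≤ x → 0 < b x)
    (hw : Summable (bdW a b)) (i : ℕ) :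
    b (i + 1) * ePlus a b i = (∑ k ∈ Finset.range (i + 1), bdPi a b k) / bdPi a b (i + 1) := by
  rw [ePlus, bd_rec ha hb hw i, div_mul_eq_div_div_swap, mul_comm,
    div_mul_cancel₀ _ (hb (i + 1) (by omega)).ne']

lemma mulB_eMinus (hb : ∀ x : ℕ, 1 ≤ x → 0 < b x) (i : ℕ) (hi : 1 ≤ i) :
    b i * eMinus a b i = (∑' k : ℕ, bdPi a b (i + k)) / bdPi a b i := by
  rw [eMinus, div_mul_eq_div_div_swap, mul_comm, div_mul_cancel₀ _ (hb i hi).ne']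

lemma mulA_eMinus (ha : ∀ x : ℕ, 0 < a x) (hb : ∀ x : ℕ, 1 ≤ x → 0 < b x)
    (hw : Summable (bdW a b)) (i : ℕ) :
    a i * eMinus a b (i + 1) = (∑' k : ℕ, bdPi a b (i + 1 + k)) / bdPi a b i := by
  rw [eMinus, ← bd_rec ha hb hw i, div_mul_eq_div_div_swap, mul_comm,
    div_mul_cancel₀ _ (ha i).ne']

end Aux

/-- In the birth-death setting, `g_j` satisfies the Stein equation
`α(i) g_j(i+1) − β(i) g_j(i) = 1_{i=j} − π(j)` and the explicit formula for its
increments. -/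
theorem gBD_stein_and_increment (a b : ℕ → ℝ)
    (ha : ∀ x : ℕ, 0 < a x) (hb0 : b 0 = 0) (hb : ∀ x : ℕ, 1 ≤ x → 0 < b x)
    (hw : Summable (bdW a b)) :
    (∀ j i : ℕ,
      a i * gBD a b j (i + 1) - b i * gBD a b j i =
        (if i = j then 1 else 0) - bdPi a b j) ∧
    (∀ j i : ℕ, 1 ≤ i →
      gBD a b j (i + 1) - gBD a b j i =
        bdPi a b j *
          ((if i + 1 ≤ j then ePlus a b (i - 1) - ePlus a b i else 0) +
           (if i = j then eMinus a b (i + 1) + ePlus a b (i - 1) else 0) +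
           (if j ≤ i - 1 then eMinus a b (i + 1) - eMinus a b i else 0))) := by
  have hpi : ∀ x, 0 < bdPi a b x := bdPi_pos ha hb hw
  constructor
  · intro j i
    rcases Nat.eq_zero_or_pos i with rfl | hi
    · -- i = 0
      rw [hb0, zero_mul, sub_zero]
      rcases Nat.eq_zero_or_pos j with rfl | hj
      · -- j = 0
        simp only [gBD, if_neg (by omega : ¬ (0 + 1 = 0)), if_neg (by omega : ¬ 0 + 1 ≤ 0),
          if_pos (le_refl 1), if_pos rfl, if_true]
        have hD : a 0 * eMinus a b 1 * bdPi a b 0 = ∑' k : ℕ, bdPi a b (0 + 1 + k) := by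
          rw [mulA_eMinus ha hb hw 0, div_mul_cancel₀ _ (hpi 0).ne']
        have htot := sum_add_tail ha hb hw 0
        rw [Finset.sum_range_one] at htot
        have h1 : eMinus a b (0 + 1) = eMinus a b 1 := rfl
        rw [h1] at hD
        linear_combination hD + htot
      · -- j ≥ 1
        simp only [gBD, if_neg (by omega : ¬ (0 + 1 = 0)), if_pos (by omega : 0 + 1 ≤ j),
          if_neg (by omega : ¬ j + 1 ≤ 0 + 1), if_neg (by omega : ¬ 0 = j)]
        have h1 : a 0 * ePlus a b 0 = 1 := by
          rw [mulA_ePlus ha 0, Finset.sum_range_one, div_self (hpi 0).ne']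
        have h2 : ePlus a b (0 + 1 - 1) = ePlus a b 0 := rfl
        rw [h2]
        linear_combination (-(bdPi a b j)) * h1
    · -- i ≥ 1
      obtain ⟨m, rfl⟩ : ∃ m, i = m + 1 := ⟨i - 1, by omega⟩
      rcases lt_trichotomy (m + 1) j with hlt | rfl | hgt
      · -- i + 1 ≤ j
        simp only [gBD, if_neg (by omega : ¬ (m + 1 + 1 = 0)), if_neg (by omega : ¬ (m + 1 = 0)),
          if_pos (by omega : m + 1 + 1 ≤ j), if_pos (by omega : m + 1 ≤ j),
          if_neg (by omega : ¬ j + 1 ≤ m + 1 + 1), if_neg (by omega : ¬ j + 1 ≤ m + 1),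
          if_neg (by omega : ¬ m + 1 = j), Nat.add_sub_cancel]
        have key : a (m + 1) * ePlus a b (m + 1) - b (m + 1) * ePlus a b m = 1 := by
          rw [mulA_ePlus ha (m + 1), mulB_ePlus ha hb hw m,
            Finset.sum_range_succ _ (m + 1)]
          have := (hpi (m + 1)).ne'
          field_simp
          ring
        linear_combination (-(bdPi a b j)) * key
      · -- i = j
        simp only [gBD, if_neg (by omega : ¬ (m + 1 + 1 = 0)), if_neg (by omega : ¬ (m + 1 = 0)),
          if_neg (by omega : ¬ m + 1 + 1 ≤ m + 1), if_pos (le_refl (m + 1)),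
          if_pos (by omega : m + 1 + 1 ≤ m + 1 + 1), if_neg (by omega : ¬ m + 1 + 1 ≤ m + 1),
          Nat.add_sub_cancel, if_pos rfl, if_true]
        have hD : a (m + 1) * eMinus a b (m + 1 + 1) * bdPi a b (m + 1)
            = ∑' k : ℕ, bdPi a b (m + 1 + 1 + k) := by
          rw [mulA_eMinus ha hb hw (m + 1), div_mul_cancel₀ _ (hpi (m + 1)).ne']
        have hB : b (m + 1) * ePlus a b m * bdPi a b (m + 1)
            = ∑ k ∈ Finset.range (m + 1), bdPi a b k := by
          rw [mulB_ePlus ha hb hw m, div_mul_cancel₀ _ (hpi (m + 1)).ne']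
        have htot := sum_add_tail ha hb hw (m + 1)
        rw [Finset.sum_range_succ _ (m + 1)] at htot
        linear_combination hD + hB + htot
      · -- i ≥ j + 1
        simp only [gBD, if_neg (by omega : ¬ (m + 1 + 1 = 0)), if_neg (by omega : ¬ (m + 1 = 0)),
          if_neg (by omega : ¬ m + 1 + 1 ≤ j), if_neg (by omega : ¬ m + 1 ≤ j),
          if_pos (by omega : j + 1 ≤ m + 1 + 1), if_pos (by omega : j + 1 ≤ m + 1),
          if_neg (by omega : ¬ m + 1 = j)]
        have key : a (m + 1) * eMinus a b (m + 1 + 1) - b (m + 1) * eMinus a b (m + 1) = -1 := by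
          rw [mulA_eMinus ha hb hw (m + 1), mulB_eMinus hb (m + 1) (by omega),
            tail_succ hw (m + 1)]
          have := (hpi (m + 1)).ne'
          field_simp
          ring
        linear_combination (bdPi a b j) * key
  · intro j i hi
    obtain ⟨m, rfl⟩ : ∃ m, i = m + 1 := ⟨i - 1, by omega⟩
    rcases lt_trichotomy (m + 1) j with hlt | rfl | hgt
    · simp only [gBD, if_neg (by omega : ¬ (m + 1 + 1 = 0)), if_neg (by omega : ¬ (m + 1 = 0)),
        if_pos (by omega : m + 1 + 1 ≤ j), if_pos (by omega : m + 1 ≤ j),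
        if_neg (by omega : ¬ j + 1 ≤ m + 1 + 1), if_neg (by omega : ¬ j + 1 ≤ m + 1),
        if_neg (by omega : ¬ m + 1 = j), if_neg (by omega : ¬ j ≤ m + 1 - 1),
        Nat.add_sub_cancel]
      split_ifs <;> (try ring) <;> (exfalso; omega)
    · simp only [gBD, if_neg (by omega : ¬ (m + 1 + 1 = 0)), if_neg (by omega : ¬ (m + 1 = 0)),
        if_neg (by omega : ¬ m + 1 + 1 ≤ m + 1), if_pos (le_refl (m + 1)),
        if_pos (by omega : m + 1 + 1 ≤ m + 1 + 1),
        if_pos rfl, if_neg (by omega : ¬ m + 1 ≤ m + 1 - 1), Nat.add_sub_cancel]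
      split_ifs <;> (try ring) <;> (exfalso; omega)
    · simp only [gBD, if_neg (by omega : ¬ (m + 1 + 1 = 0)), if_neg (by omega : ¬ (m + 1 = 0)),
        if_neg (by omega : ¬ m + 1 + 1 ≤ j), if_neg (by omega : ¬ m + 1 ≤ j),
        if_pos (by omega : j + 1 ≤ m + 1 + 1), if_pos (by omega : j + 1 ≤ m + 1),
        if_neg (by omega : ¬ m + 1 = j), if_pos (by omega : j ≤ m + 1 - 1),
        Nat.add_sub_cancel]
      split_ifs <;> (try ring) <;> (exfalso; omega)
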